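/- Let p ∈ (0,1), and define q_Lap(y) = (ln(1/p)/(2(1-p)²))·(p^{|y|} - p^{2-|y|}) for |y| ≤ 1 and 0 otherwise. Then q_Lap is a probability density, and if η is discrete Laplace with parameter p and Y is an independent random variable with density q_Lap, then η + Y has the continuous Laplace density f(z) = (ln(1/p)/2)·p^{|z|}. -/

import Mathlib

open MeasureTheory

/-- The post-processing density turning discrete Laplace into continuous
Laplace noise. -/
noncomputable def qLap (p : ℝ) (y : ℝ) : ℝ :=
  if |y| ≤ 1 then
    Real.log (1 / p) / (2 * (1 - p) ^ 2) * (p ^ |y| - p ^ (2 - |y|))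
  else 0

private lemma qLap_zero_of_one_le (p : ℝ) {y : ℝ} (hy : 1 ≤ |y|) : qLap p y = 0 := by
  rcases eq_or_lt_of_le hy with h | h
  · simp only [qLap, ← h, if_pos le_rfl]
    norm_num
  · simp only [qLap, if_neg (not_le.mpr h)]

/-- `q_Lap` is a probability density, and adding independent noise with
density `q_Lap` to discrete Laplace noise yields the continuous Laplace
density `(ln(1/p)/2)·p^{|z|}`. -/
theorem discrete_laplace_to_laplace
    (p : ℝ) (hp0 : 0 < p) (hp1 : p < 1) :
    (∀ y : ℝ, 0 ≤ qLap p y) ∧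
      (∫ y : ℝ, qLap p y) = 1 ∧
      ∀ z : ℝ, (∑' k : ℤ, (1 - p) / (1 + p) * p ^ |k| * qLap p (z - k)) =
        Real.log (1 / p) / 2 * p ^ |z| := by
  have h1p : (0:ℝ) < 1 - p := by linarith
  have h1p' : (1:ℝ) - p ≠ 0 := h1p.ne'
  have h1pp : (1:ℝ) + p ≠ 0 := by positivity
  have hL : Real.log (1 / p) = -Real.log p := by rw [one_div, Real.log_inv]
  have hlogp : Real.log p < 0 := Real.log_neg hp0 hp1
  have hlogp' : Real.log p ≠ 0 := hlogp.ne
  have hp2 : p ^ (2:ℝ) = p * p := by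
    rw [show (2:ℝ) = ((2:ℕ):ℝ) by norm_num, Real.rpow_natCast]; ring
  refine ⟨?_, ?_, ?_⟩
  · -- nonnegativity
    intro y
    simp only [qLap]
    split_ifs with h
    · apply mul_nonneg
      · apply div_nonneg
        · rw [hL]; linarith
        · positivity
      · have hle : p ^ (2 - |y|) ≤ p ^ |y| :=
          Real.rpow_le_rpow_of_exponent_ge hp0 hp1.le (by linarith)
        linarith
    · exact le_rfl
  · -- integral is 1
    set C := Real.log (1 / p) / (2 * (1 - p) ^ 2) with hC
    set g : ℝ → ℝ := fun u => C * (p ^ u - p ^ (2 - u)) with hg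
    have hcont : Continuous g := by
      apply continuous_const.mul
      apply Continuous.sub
      · exact continuous_const.rpow continuous_id fun x => Or.inl hp0.ne'
      · exact continuous_const.rpow (continuous_const.sub continuous_id) fun x => Or.inl hp0.ne'
    have hqe : ∀ y : ℝ, qLap p y = (Set.Iic (1:ℝ)).indicator g |y| := by
      intro y
      simp only [qLap, Set.indicator_apply, Set.mem_Iic, hg, hC]
    have key : ∫ u in Set.Ioi (0:ℝ), (Set.Iic (1:ℝ)).indicator g u = ∫ u in (0:ℝ)..1, g u := by
      rw [integral_indicator measurableSet_Iic, Measure.restrict_restrict measurableSet_Iic,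
        show Set.Iic (1:ℝ) ∩ Set.Ioi 0 = Set.Ioc 0 1 by ext x; simp [and_comm],
        ← intervalIntegral.integral_of_le zero_le_one]
    have hderiv : ∀ u ∈ Set.uIcc (0:ℝ) 1,
        HasDerivAt (fun u => C / Real.log p * (p ^ u + p ^ (2 - u))) (g u) u := by
      intro u _
      have d1 : HasDerivAt (fun u : ℝ => p ^ u) (p ^ u * Real.log p) u :=
        (Real.hasStrictDerivAt_const_rpow hp0 u).hasDerivAt
      have d2 : HasDerivAt (fun u : ℝ => p ^ (2 - u)) (p ^ (2 - u) * Real.log p * (-1)) u := by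
        have h2 := (Real.hasStrictDerivAt_const_rpow hp0 (2 - u)).hasDerivAt
        exact h2.comp u ((hasDerivAt_id u).const_sub 2)
      have h3 : HasDerivAt (fun u => C / Real.log p * (p ^ u + p ^ (2 - u)))
          (C / Real.log p * (p ^ u * Real.log p + p ^ (2 - u) * Real.log p * (-1))) u :=
        (d1.add d2).const_mul (C / Real.log p)
      convert h3 using 1
      simp only [hg]
      field_simp
      ring
    have hint := intervalIntegral.integral_eq_sub_of_hasDerivAt hderiv
      (hcont.intervalIntegrable 0 1)
    have hmain : ∫ y : ℝ, qLap p y = 2 * ∫ u in (0:ℝ)..1, g u := by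
      simp_rw [hqe]
      rw [integral_comp_abs, key]
    rw [hmain, hint]
    norm_num [Real.rpow_one, Real.rpow_zero, hp2, hC, hL]
    field_simp
    ring
  · -- convolution identity
    intro z
    set n : ℤ := ⌊z⌋ with hn
    have hnz : (n:ℝ) ≤ z := Int.floor_le z
    have hnz1 : z < n + 1 := Int.lt_floor_add_one z
    have hsupp' : ∀ k : ℤ, k ∉ ({n, n+1} : Finset ℤ) →
        (1 - p) / (1 + p) * p ^ |k| * qLap p (z - k) = 0 := by
      intro k hk
      simp only [Finset.mem_insert, Finset.mem_singleton, not_or] at hk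
      have habs : 1 ≤ |z - (k:ℝ)| := by
        rcases lt_or_ge k n with h | h
        · have hk1 : (k:ℝ) ≤ (n:ℝ) - 1 := by
            have hle : k ≤ n - 1 := by omega
            exact_mod_cast hle
          calc (1:ℝ) ≤ z - k := by linarith
            _ ≤ |z - k| := le_abs_self _
        · have hk2 : n + 2 ≤ k := by omega
          have hk2' : (n:ℝ) + 2 ≤ (k:ℝ) := by exact_mod_cast hk2
          calc (1:ℝ) ≤ -(z - k) := by linarith
            _ ≤ |z - k| := neg_le_abs _
      rw [qLap_zero_of_one_le p habs, mul_zero]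
    rw [tsum_eq_sum hsupp', Finset.sum_pair (by omega : n ≠ n + 1)]
    -- abbreviations
    set t : ℝ := z - (n:ℝ) with htdef
    have ht0 : 0 ≤ t := by simp only [htdef]; linarith
    have ht1 : t < 1 := by simp only [htdef]; linarith
    set Q : ℝ := p ^ t with hQdef
    have hQ : 0 < Q := Real.rpow_pos_of_pos hp0 t
    have e1 : qLap p (z - (n:ℝ)) = Real.log (1 / p) / (2 * (1 - p) ^ 2) *
        (Q - p * p / Q) := by
      simp only [qLap, ← htdef]
      rw [abs_of_nonneg ht0, if_pos (by linarith)]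
      congr 1
      rw [Real.rpow_sub hp0 2 t, hp2, hQdef]
    have e2 : qLap p (z - ((n:ℤ)+1 : ℤ)) = Real.log (1 / p) / (2 * (1 - p) ^ 2) *
        (p / Q - p * Q) := by
      have harg : z - (((n:ℤ)+1 : ℤ) : ℝ) = t - 1 := by push_cast; simp [htdef]; ring
      have habs : |z - (((n:ℤ)+1 : ℤ) : ℝ)| = 1 - t := by
        rw [harg, abs_of_nonpos (by linarith)]; ring
      simp only [qLap, habs]
      rw [if_pos (by linarith)]
      congr 1
      rw [show (2 : ℝ) - (1 - t) = 1 + t by ring, Real.rpow_sub hp0 1 t,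
        Real.rpow_add hp0 1 t, Real.rpow_one, hQdef]
    rw [e1, e2]
    have hPz : p ^ z = (p ^ (n:ℤ) : ℝ) * Q := by
      rw [show z = (n:ℝ) + t by simp [htdef], Real.rpow_add hp0, Real.rpow_intCast]
    have hP : (0:ℝ) < (p ^ (n:ℤ) : ℝ) := zpow_pos hp0 n
    rcases le_or_gt 0 n with hnn | hnn
    · -- nonnegative case
      have hz0 : 0 ≤ z := le_trans (by exact_mod_cast hnn) hnz
      have habsn : |n| = n := abs_of_nonneg hnn
      have habsn1 : |n + 1| = n + 1 := abs_of_nonneg (by omega)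
      have hzp : p ^ |z| = (p ^ (n:ℤ) : ℝ) * Q := by rw [abs_of_nonneg hz0, hPz]
      rw [habsn, habsn1, hzp, zpow_add_one₀ hp0.ne']
      field_simp
      ring
    · -- negative case
      have hn1 : n + 1 ≤ 0 := by omega
      have hz0 : z < 0 := lt_of_lt_of_le hnz1 (by exact_mod_cast hn1)
      have habsn : |n| = -n := abs_of_neg hnn
      have habsn1 : |n + 1| = -(n + 1) := by
        rcases eq_or_lt_of_le hn1 with h | h
        · rw [h]; simp
        · exact abs_of_neg h
      have hzp : p ^ |z| = ((p ^ (n:ℤ) : ℝ) * Q)⁻¹ := by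
        rw [abs_of_neg hz0, Real.rpow_neg hp0.le, hPz]
      rw [habsn, habsn1, hzp, zpow_neg, zpow_neg, zpow_add_one₀ hp0.ne']
      field_simp
      ring
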